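/- Let U ⊆ ℂ be open and let z₁, w₁ : U → ℂ be differentiable functions with z₁(t) ≠ 0 for all t ∈ U, satisfying system (15) on U: dz₁/dt = −z₁² + w₁/2, dw₁/dt = (2t − w₁²)/(2z₁) + 4z₁w₁. Then the pair (−z₁, 4z₁² − w₁) is differentiable and again satisfies system (15) on U; moreover the map π : (z₁, w₁) ↦ (−z₁, 4z₁² − w₁) satisfies π ∘ π = id, and π interchanges the two points (0, √(2t)) and (0, −√(2t)) for every t (i.e. for any c with c² = 2t, π(0, c) = (0, −c)). -/

import Mathlib

/-- The transformation π : (z₁, w₁) ↦ (−z₁, 4z₁² − w₁) is a symmetry of system (15):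
it takes solutions to solutions, satisfies π ∘ π = id, and interchanges the two
accessible singular points (0, √(2t)) and (0, −√(2t)). -/
theorem symmetry_pi_of_system15
    (U : Set ℂ) (hU : IsOpen U) (z₁ w₁ : ℂ → ℂ)
    (hz : ∀ t ∈ U, DifferentiableAt ℂ z₁ t) (hw : ∀ t ∈ U, DifferentiableAt ℂ w₁ t)
    (hzne : ∀ t ∈ U, z₁ t ≠ 0)
    (hsys1 : ∀ t ∈ U, deriv z₁ t = -(z₁ t) ^ 2 + w₁ t / 2)
    (hsys2 : ∀ t ∈ U, deriv w₁ t =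
      (2 * t - (w₁ t) ^ 2) / (2 * z₁ t) + 4 * z₁ t * w₁ t)
    (Z W : ℂ → ℂ) (hZ : ∀ t, Z t = -(z₁ t)) (hW : ∀ t, W t = 4 * (z₁ t) ^ 2 - w₁ t)
    (π : ℂ × ℂ → ℂ × ℂ) (hπ : ∀ p : ℂ × ℂ, π p = (-p.1, 4 * p.1 ^ 2 - p.2)) :
    (∀ t ∈ U, DifferentiableAt ℂ Z t) ∧ (∀ t ∈ U, DifferentiableAt ℂ W t) ∧
    (∀ t ∈ U, deriv Z t = -(Z t) ^ 2 + W t / 2) ∧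
    (∀ t ∈ U, deriv W t = (2 * t - (W t) ^ 2) / (2 * Z t) + 4 * Z t * W t) ∧
    (∀ p : ℂ × ℂ, π (π p) = p) ∧
    (∀ t c : ℂ, c ^ 2 = 2 * t → π (0, c) = (0, -c)) := by
  have hZf : Z = fun t => -(z₁ t) := funext hZ
  have hWf : W = fun t => 4 * (z₁ t) ^ 2 - w₁ t := funext hW
  refine ⟨?_, ?_, ?_, ?_, ?_, ?_⟩
  · intro t ht
    rw [hZf]; exact (hz t ht).neg
  · intro t ht
    rw [hWf]
    exact DifferentiableAt.sub (((hz t ht).pow 2).const_mul 4) (hw t ht)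
  · intro t ht
    have hdZ : deriv Z t = -deriv z₁ t := by rw [hZf, deriv.fun_neg]
    rw [hdZ, hsys1 t ht, hZ, hW]
    ring
  · intro t ht
    have h1 := hsys1 t ht
    have h2 := hsys2 t ht
    have hne := hzne t ht
    have hd : deriv W t = 4 * (2 * z₁ t * deriv z₁ t) - deriv w₁ t := by
      rw [hWf]
      rw [deriv_fun_sub (((hz t ht).fun_pow 2).const_mul 4) (hw t ht),
        deriv_const_mul _ ((hz t ht).fun_pow 2),
        deriv_fun_pow (hz t ht) _]
      ring
    rw [hd, h1, h2, hZ, hW]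
    field_simp
    ring
  · intro p
    rw [hπ, hπ]
    simp
  · intro t c hc
    rw [hπ]
    norm_num
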